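/- Let κ ≤ α ≤ ρ with ρ ≥ 0, and let R be a real symmetric (n−1)×(n−1) matrix whose eigenvalues are all ≤ α and whose trace satisfies Tr(R) ≤ β, where β = ρ + (n−2)α − ((n−1)√(ρ−κ) − (n−2)√(ρ−α))². Then Tr(√(ρI − R)) ≥ (n−1)√(ρ−κ). -/

import Mathlib

open Matrix

open scoped ComplexOrder in
/-- The positive semidefinite square root of a positive semidefinite matrix
(the definition `Matrix.PosSemidef.sqrt` of Mathlib, December 2024, since removed). -/
noncomputable def Matrix.PosSemidef.sqrt {n : Type*} {𝕜 : Type*} [Fintype n] [RCLike 𝕜]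
    [DecidableEq n] {A : Matrix n n 𝕜} (hA : A.PosSemidef) : Matrix n n 𝕜 :=
  hA.1.eigenvectorUnitary.1 * Matrix.diagonal ((↑) ∘ (√·) ∘ hA.1.eigenvalues) *
  (star hA.1.eigenvectorUnitary : Matrix n n 𝕜)

/-- Mixed sectional/Ricci bound implies root-Ricci class `(ρ,κ)`.
Matrices have size `(n−1) × (n−1)` with `m = n−1`, so `n−2` is `(m:ℝ) − 1`.
If all eigenvalues of `R` are at most `α` (i.e. `αI − R` is PSD),
`Tr R ≤ β := ρ + (n−2)α − ((n−1)√(ρ−κ) − (n−2)√(ρ−α))²`, and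
`κ ≤ α ≤ ρ`, `0 ≤ ρ`, then `Tr √(ρI − R) ≥ (n−1)√(ρ−κ)`. -/
theorem mixed_bound_implies_rootRic {m : ℕ} (hm : 1 ≤ m)
    {R : Matrix (Fin m) (Fin m) ℝ} {κ α ρ : ℝ}
    (hκα : κ ≤ α) (hαρ : α ≤ ρ) (hρ0 : 0 ≤ ρ)
    (hα : (α • (1 : Matrix (Fin m) (Fin m) ℝ) - R).PosSemidef)
    (hρ : (ρ • (1 : Matrix (Fin m) (Fin m) ℝ) - R).PosSemidef)
    (htr : R.trace ≤ ρ + ((m : ℝ) - 1) * α -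
      ((m : ℝ) * Real.sqrt (ρ - κ) - ((m : ℝ) - 1) * Real.sqrt (ρ - α)) ^ 2) :
    (m : ℝ) * Real.sqrt (ρ - κ) ≤ hρ.sqrt.trace := by
  classical
  set S := ρ • (1 : Matrix (Fin m) (Fin m) ℝ) - R with hS
  set ev := hρ.1.eigenvalues with hev
  set U : Matrix (Fin m) (Fin m) ℝ := (hρ.1.eigenvectorUnitary : Matrix (Fin m) (Fin m) ℝ) with hU
  have hUstar : star U * U = 1 :=
    (Matrix.mem_unitaryGroup_iff').mp (hρ.1.eigenvectorUnitary).2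
  -- trace of sqrt
  have htrace_sqrt : hρ.sqrt.trace = ∑ i, Real.sqrt (ev i) := by
    rw [Matrix.PosSemidef.sqrt, Matrix.trace_mul_cycle, ← hU, hUstar, one_mul,
      Matrix.trace_diagonal]
    simp
    rfl
  -- trace of S
  have htrace_S : S.trace = ∑ i, ev i := by
    conv_lhs => rw [hρ.1.spectral_theorem, Unitary.conjStarAlgAut_apply]
    rw [Matrix.trace_mul_cycle, ← hU, hUstar, one_mul, Matrix.trace_diagonal]
    simp
    rfl
  -- eigenvalue lower bound
  have hev_ge : ∀ i, ρ - α ≤ ev i := by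
    intro i
    have hvnorm : ‖hρ.1.eigenvectorBasis i‖ = 1 := hρ.1.eigenvectorBasis.orthonormal.1 i
    set v : Fin m → ℝ := ⇑(hρ.1.eigenvectorBasis i) with hv
    have hvv : star v ⬝ᵥ v = 1 := by
      have := real_inner_self_eq_norm_sq (hρ.1.eigenvectorBasis i)
      rw [hvnorm] at this
      have h2 : inner ℝ (hρ.1.eigenvectorBasis i) (hρ.1.eigenvectorBasis i) = star v ⬝ᵥ v := by
        exact (EuclideanSpace.inner_eq_star_dotProduct _ _).trans (dotProduct_comm _ _)
      rw [h2] at this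
      simpa using this
    have hmv : S *ᵥ v = ev i • v := hρ.1.mulVec_eigenvectorBasis i
    have hpsd := hα.dotProduct_mulVec_nonneg v
    have hdiff : α • (1 : Matrix (Fin m) (Fin m) ℝ) - R = S - (ρ - α) • 1 := by
      rw [hS]; ring_nf; rw [sub_smul]; abel
    rw [hdiff] at hpsd
    have : star v ⬝ᵥ (S - (ρ - α) • 1) *ᵥ v = (ev i - (ρ - α)) := by
      rw [Matrix.sub_mulVec, hmv, Matrix.smul_mulVec, Matrix.one_mulVec,
        dotProduct_sub, dotProduct_smul, dotProduct_smul, hvv]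
      simp
    rw [this] at hpsd
    simpa using hpsd
  have hev_nonneg : ∀ i, 0 ≤ ev i := fun i => le_trans (by linarith) (hev_ge i)
  -- scalar part
  set c : ℝ := ρ - α with hc
  set sc : ℝ := Real.sqrt c with hsc
  set D : ℝ := (m : ℝ) * Real.sqrt (ρ - κ) - ((m : ℝ) - 1) * Real.sqrt (ρ - α) with hD
  have hc0 : 0 ≤ c := by linarith
  have hsc0 : 0 ≤ sc := Real.sqrt_nonneg _
  have hsqrtle : Real.sqrt (ρ - α) ≤ Real.sqrt (ρ - κ) := Real.sqrt_le_sqrt (by linarith)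
  have hm1 : (1 : ℝ) ≤ (m : ℝ) := by exact_mod_cast hm
  have hDsc : sc ≤ D := by
    have : D - sc = (m : ℝ) * (Real.sqrt (ρ - κ) - Real.sqrt (ρ - α)) := by
      rw [hD, hsc, hc]; ring
    nlinarith [Real.sqrt_nonneg (ρ - α)]
  have hD0 : 0 ≤ D := le_trans hsc0 hDsc
  -- trace S lower bound
  have htrS_lb : ((m : ℝ) - 1) * c + D ^ 2 ≤ ∑ i, ev i := by
    rw [← htrace_S, hS, Matrix.trace_sub, Matrix.trace_smul, Matrix.trace_one]
    simp only [Fintype.card_fin, smul_eq_mul]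
    rw [hc, hD]
    nlinarith [htr]
  set x : Fin m → ℝ := fun i => Real.sqrt (ev i) - sc with hx
  have hx0 : ∀ i ∈ Finset.univ, 0 ≤ x i := by
    intro i _
    have : sc ≤ Real.sqrt (ev i) := by
      rw [hsc]; exact Real.sqrt_le_sqrt (hev_ge i)
    simpa [hx] using this
  set s : ℝ := ∑ i, x i with hs
  have hs0 : 0 ≤ s := Finset.sum_nonneg hx0
  have hsumsq : ∑ i, x i ^ 2 ≤ s ^ 2 := Finset.sum_sq_le_sq_sum_of_nonneg hx0
  have hexpand : ∑ i, ev i = ∑ i, x i ^ 2 + 2 * sc * s + (m : ℝ) * c := by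
    have : ∀ i, ev i = x i ^ 2 + 2 * sc * x i + c := by
      intro i
      have h1 : Real.sqrt (ev i) ^ 2 = ev i := Real.sq_sqrt (hev_nonneg i)
      have h2 : sc ^ 2 = c := Real.sq_sqrt hc0
      simp only [hx]
      linear_combination h2 - h1
    rw [Finset.sum_congr rfl (fun i _ => this i)]
    rw [Finset.sum_add_distrib, Finset.sum_add_distrib, ← Finset.mul_sum]
    simp [hs, Finset.card_univ, mul_comm]
  have hkey : D ≤ s + sc := by
    have h2 : sc ^ 2 = c := Real.sq_sqrt hc0
    have hq : D ^ 2 ≤ (s + sc) ^ 2 := by nlinarith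
    nlinarith
  have hfin : ∑ i, Real.sqrt (ev i) = s + (m : ℝ) * sc := by
    rw [hs, hx]
    rw [Finset.sum_sub_distrib]
    simp [Finset.card_univ, mul_comm]
  rw [htrace_sqrt, hfin]
  have : (m : ℝ) * Real.sqrt (ρ - κ) = D + ((m : ℝ) - 1) * sc := by
    rw [hD, hsc, hc]; ring
  rw [this]
  nlinarith
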